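/- Let ∇→: Ω¹ → Ω¹⊗_B Ω¹ be a degree-zero right connection and ∇←: X → Ω¹⊗_B X a degree-zero left connection on a ℤ²-graded bimodule X, such that ∇→⊗1 + 1⊗∇← is well defined on Ω¹⊗_B X. Then the deformed operators satisfy ∇→_θ ⊗_θ 1 + 1 ⊗_θ ∇←_θ = H_θ ∘ (∇→⊗1 + 1⊗∇←) ∘ (T_θ^{Ω¹,X})^{−1} as maps Ω¹_θ ⊗_θ X_θ → Ω¹_θ ⊗_θ Ω¹_θ ⊗_θ X_θ, where H_θ = (T_θ^{Ω¹,Ω¹}⊗_θ 1)∘T_θ^{Ω¹⊗Ω¹,X} = (1⊗_θ T_θ^{Ω¹,X})∘T_θ^{Ω¹,Ω¹⊗X}. -/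

import Mathlib

/-- For degree-zero connections `∇→ : Ω¹ → Ω¹⊗Ω¹` (right) and
`∇← : X → Ω¹⊗X` (left), the deformed operators satisfy
`∇→_θ ⊗_θ 1 + 1 ⊗_θ ∇←_θ = H_θ ∘ (∇→⊗1 + 1⊗∇←) ∘ (T_θ^{Ω¹,X})⁻¹` as maps
`Ω¹_θ ⊗_θ X_θ → Ω¹_θ ⊗_θ Ω¹_θ ⊗_θ X_θ`; stated on the generator `T_θ(ω⊗x)`,
`l^{−n₂(ω)n₁(x)} • ((∇→_θ ω)⊗_θ x + ω ⊗_θ ∇←_θ x) = H_θ((∇→ω)⊗x + ω⊗∇←x)`.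
Here `E3/F3` (resp. `E3θ/F3θ`) are the canonical maps `(Ω¹⊗Ω¹)×X → Ω¹⊗Ω¹⊗X` and
`Ω¹×(Ω¹⊗X) → Ω¹⊗Ω¹⊗X`, and `∇→_θ = T_θ∘∇→`, `∇←_θ = T_θ∘∇←`. -/
theorem stmt_14 {Ω X T W1 W2 Tθ W1θ W2θ : Type*}
    [AddCommGroup Ω] [Module ℂ Ω] [AddCommGroup X] [Module ℂ X]
    [AddCommGroup T] [Module ℂ T] [AddCommGroup W1] [Module ℂ W1]
    [AddCommGroup W2] [Module ℂ W2] [AddCommGroup Tθ] [Module ℂ Tθ]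
    [AddCommGroup W1θ] [Module ℂ W1θ] [AddCommGroup W2θ] [Module ℂ W2θ]
    (l : ℂ) (hl : ‖l‖ = 1)
    (Gr : ℤ × ℤ → Submodule ℂ Ω) (GrX : ℤ × ℤ → Submodule ℂ X)
    (t : Ω → Ω → T) (tθ : Ω → Ω → Tθ)
    (t1 : Ω → X → W1) (t1θ : Ω → X → W1θ)
    (t3 : Ω → Ω → X → W2) (t3θ : Ω → Ω → X → W2θ)
    (Tmap : T → Tθ)
    (hTmap_add : ∀ v w : T, Tmap (v + w) = Tmap v + Tmap w)
    (hTmap_t : ∀ (m n : ℤ × ℤ) (α β : Ω), α ∈ Gr m → β ∈ Gr n →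
      Tmap (t α β) = l ^ (-(m.2 * n.1)) • tθ α β)
    (T1map : W1 → W1θ)
    (hT1map_add : ∀ v w : W1, T1map (v + w) = T1map v + T1map w)
    (hT1map_t : ∀ (m n : ℤ × ℤ) (β : Ω) (y : X), β ∈ Gr m → y ∈ GrX n →
      T1map (t1 β y) = l ^ (-(m.2 * n.1)) • t1θ β y)
    (Hθ : W2 → W2θ)
    (hHθ_add : ∀ v w : W2, Hθ (v + w) = Hθ v + Hθ w)
    (hHθ_t : ∀ (m n p : ℤ × ℤ) (α β : Ω) (y : X), α ∈ Gr m → β ∈ Gr n → y ∈ GrX p →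
      Hθ (t3 α β y) = l ^ (-(m.2 * n.1) - m.2 * p.1 - n.2 * p.1) • t3θ α β y)
    (E3 : T → X → W2)
    (hE3_add : ∀ (v w : T) (y : X), E3 (v + w) y = E3 v y + E3 w y)
    (hE3_t : ∀ (α β : Ω) (y : X), E3 (t α β) y = t3 α β y)
    (F3 : Ω → W1 → W2)
    (hF3_add : ∀ (ω : Ω) (v w : W1), F3 ω (v + w) = F3 ω v + F3 ω w)
    (hF3_t : ∀ (ω β : Ω) (y : X), F3 ω (t1 β y) = t3 ω β y)
    (E3θ : Tθ → X → W2θ)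
    (hE3θ_add : ∀ (v w : Tθ) (y : X), E3θ (v + w) y = E3θ v y + E3θ w y)
    (hE3θ_s : ∀ (c : ℂ) (v : Tθ) (y : X), E3θ (c • v) y = c • E3θ v y)
    (hE3θ_t : ∀ (α β : Ω) (y : X), E3θ (tθ α β) y = t3θ α β y)
    (F3θ : Ω → W1θ → W2θ)
    (hF3θ_add : ∀ (ω : Ω) (v w : W1θ), F3θ ω (v + w) = F3θ ω v + F3θ ω w)
    (hF3θ_s : ∀ (ω : Ω) (c : ℂ) (v : W1θ), F3θ ω (c • v) = c • F3θ ω v)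
    (hF3θ_t : ∀ (ω β : Ω) (y : X), F3θ ω (t1θ β y) = t3θ ω β y)
    (covr : Ω → T)
    (hcovr_hom : ∀ (n : ℤ × ℤ) (ω : Ω), ω ∈ Gr n →
      ∃ (k : ℕ) (α β : Fin k → Ω) (d e : Fin k → ℤ × ℤ),
        (∀ i, α i ∈ Gr (d i)) ∧ (∀ i, β i ∈ Gr (e i)) ∧ (∀ i, d i + e i = n) ∧
        covr ω = ∑ i, t (α i) (β i))
    (covl : X → W1)
    (hcovl_hom : ∀ (n : ℤ × ℤ) (x : X), x ∈ GrX n →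
      ∃ (k : ℕ) (β : Fin k → Ω) (y : Fin k → X) (d e : Fin k → ℤ × ℤ),
        (∀ i, β i ∈ Gr (d i)) ∧ (∀ i, y i ∈ GrX (e i)) ∧ (∀ i, d i + e i = n) ∧
        covl x = ∑ i, t1 (β i) (y i)) :
    ∀ (m n : ℤ × ℤ) (ω : Ω) (x : X), ω ∈ Gr m → x ∈ GrX n →
      l ^ (-(m.2 * n.1)) • (E3θ (Tmap (covr ω)) x + F3θ ω (T1map (covl x)))
        = Hθ (E3 (covr ω) x + F3 ω (covl x)) := by

  intro m n ω x hω hx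
  obtain ⟨k, α, β, d, e, hα, hβ, hde, hcov⟩ := hcovr_hom m ω hω
  obtain ⟨k', β', y, d', e', hβ', hy, hde', hcov'⟩ := hcovl_hom n x hx
  have hl0 : l ≠ 0 := by
    intro h; rw [h] at hl; simp at hl
  have hA : E3θ (Tmap (covr ω)) x
      = ∑ i, l ^ (-((d i).2 * (e i).1)) • t3θ (α i) (β i) x := by
    rw [hcov]
    rw [show Tmap (∑ i, t (α i) (β i)) = ∑ i, Tmap (t (α i) (β i)) from
      map_sum (AddMonoidHom.mk' Tmap hTmap_add) _ _]
    rw [show E3θ (∑ i, Tmap (t (α i) (β i))) x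
        = ∑ i, E3θ (Tmap (t (α i) (β i))) x from
      map_sum (AddMonoidHom.mk' (fun v => E3θ v x) (fun a b => hE3θ_add a b x)) _ _]
    refine Finset.sum_congr rfl fun i _ => ?_
    rw [hTmap_t (d i) (e i) _ _ (hα i) (hβ i), hE3θ_s, hE3θ_t]
  have hB : F3θ ω (T1map (covl x))
      = ∑ j, l ^ (-((d' j).2 * (e' j).1)) • t3θ ω (β' j) (y j) := by
    rw [hcov']
    rw [show T1map (∑ j, t1 (β' j) (y j)) = ∑ j, T1map (t1 (β' j) (y j)) from
      map_sum (AddMonoidHom.mk' T1map hT1map_add) _ _]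
    rw [show F3θ ω (∑ j, T1map (t1 (β' j) (y j)))
        = ∑ j, F3θ ω (T1map (t1 (β' j) (y j))) from
      map_sum (AddMonoidHom.mk' (F3θ ω) (hF3θ_add ω)) _ _]
    refine Finset.sum_congr rfl fun j _ => ?_
    rw [hT1map_t (d' j) (e' j) _ _ (hβ' j) (hy j), hF3θ_s, hF3θ_t]
  have hC : E3 (covr ω) x = ∑ i, t3 (α i) (β i) x := by
    rw [hcov]
    rw [show E3 (∑ i, t (α i) (β i)) x = ∑ i, E3 (t (α i) (β i)) x from
      map_sum (AddMonoidHom.mk' (fun v => E3 v x) (fun a b => hE3_add a b x)) _ _]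
    exact Finset.sum_congr rfl fun i _ => hE3_t _ _ _
  have hD : F3 ω (covl x) = ∑ j, t3 ω (β' j) (y j) := by
    rw [hcov']
    rw [show F3 ω (∑ j, t1 (β' j) (y j)) = ∑ j, F3 ω (t1 (β' j) (y j)) from
      map_sum (AddMonoidHom.mk' (F3 ω) (hF3_add ω)) _ _]
    exact Finset.sum_congr rfl fun j _ => hF3_t _ _ _
  have hRHS : Hθ (E3 (covr ω) x + F3 ω (covl x))
      = (∑ i, l ^ (-((d i).2 * (e i).1) - (d i).2 * n.1 - (e i).2 * n.1) •
          t3θ (α i) (β i) x)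
        + ∑ j, l ^ (-(m.2 * (d' j).1) - m.2 * (e' j).1 - (d' j).2 * (e' j).1) •
          t3θ ω (β' j) (y j) := by
    rw [hC, hD]
    rw [show Hθ ((∑ i, t3 (α i) (β i) x) + ∑ j, t3 ω (β' j) (y j))
        = (∑ i, Hθ (t3 (α i) (β i) x)) + ∑ j, Hθ (t3 ω (β' j) (y j)) by
      rw [hHθ_add]
      congr 1
      · exact map_sum (AddMonoidHom.mk' Hθ hHθ_add) (fun i => t3 (α i) (β i) x) Finset.univ
      · exact map_sum (AddMonoidHom.mk' Hθ hHθ_add) (fun j => t3 ω (β' j) (y j)) Finset.univ]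
    congr 1
    · exact Finset.sum_congr rfl fun i _ =>
        hHθ_t (d i) (e i) n _ _ _ (hα i) (hβ i) hx
    · exact Finset.sum_congr rfl fun j _ =>
        hHθ_t m (d' j) (e' j) _ _ _ hω (hβ' j) (hy j)
  rw [hA, hB, hRHS, smul_add, Finset.smul_sum, Finset.smul_sum]
  congr 1
  · refine Finset.sum_congr rfl fun i _ => ?_
    rw [smul_smul, ← zpow_add₀ hl0]
    congr 1
    have h2 : (d i).2 + (e i).2 = m.2 := by rw [← hde i]; rfl
    rw [← h2]; ring
  · refine Finset.sum_congr rfl fun j _ => ?_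
    rw [smul_smul, ← zpow_add₀ hl0]
    congr 1
    have h1 : (d' j).1 + (e' j).1 = n.1 := by rw [← hde' j]; rfl
    rw [← h1]; ring
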